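/- Let Γ=(G,σ) be a weighted signed graph. Then λ₁(Δ^σ)/2 ≤ h₁^σ(μ_d) ≤ √(2 λ₁(Δ^σ)). -/

import Mathlib

open Finset Real

open scoped Classical

noncomputable section

namespace SignedGraph

variable {N : ℕ}

/-- The degree `d(u) = Σ_v w(u,v)` of a vertex. -/
def deg (w : Fin N → Fin N → ℝ) (u : Fin N) : ℝ := ∑ v, w u v

/-- Hypotheses making `(w, sgn)` a weighted signed graph: `w` is a symmetric nonnegative
weight function vanishing on the diagonal and `sgn` is a symmetric `±1`-valued signature. -/
structure IsWSG {N : ℕ} (w : Fin N → Fin N → ℝ) (sgn : Fin N → Fin N → ℝ) : Prop where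
  w_symm : ∀ u v, w u v = w v u
  w_nonneg : ∀ u v, 0 ≤ w u v
  w_loopless : ∀ u, w u u = 0
  sgn_symm : ∀ u v, sgn u v = sgn v u
  sgn_pm : ∀ u v, sgn u v = 1 ∨ sgn u v = -1

/-- The signature obtained from `sgn` by switching with the function `θ : V → {±1}`. -/
def switchSgn (sgn : Fin N → Fin N → ℝ) (θ : Fin N → ℝ) : Fin N → Fin N → ℝ :=
  fun u v => θ u * sgn u v * θ v

/-- The signed adjacency matrix `A^σ`, `A^σ_{uv} = σ(u,v) w(u,v)`. -/
def adj (w sgn : Fin N → Fin N → ℝ) : Matrix (Fin N) (Fin N) ℝ :=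
  Matrix.of fun u v => sgn u v * w u v

/-- The symmetric form `I - D^{-1/2} A^σ D^{-1/2}` of the signed normalized Laplacian,
whose eigenvalues are those of `Δ^σ = I - D^{-1} A^σ`. -/
def nlapSym (w sgn : Fin N → Fin N → ℝ) : Matrix (Fin N) (Fin N) ℝ :=
  Matrix.of fun u v =>
    (if u = v then (1 : ℝ) else 0) -
      sgn u v * w u v / (Real.sqrt (deg w u) * Real.sqrt (deg w v))

/-- The signed (Kirchhoff) Laplacian `L^σ = D - A^σ`. -/
def lap (w sgn : Fin N → Fin N → ℝ) : Matrix (Fin N) (Fin N) ℝ :=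
  Matrix.diagonal (deg w) - adj w sgn

/-- The nondecreasing enumeration of the eigenvalues (with multiplicity) of a real
symmetric matrix; junk value `0` if the matrix is not symmetric.  `evals M ⟨k-1,_⟩`
is the `k`-th smallest eigenvalue `λ_k(M)`. -/
def evals (M : Matrix (Fin N) (Fin N) ℝ) : Fin N → ℝ :=
  if h : M.IsHermitian then (fun i => h.eigenvalues (Tuple.sort h.eigenvalues i)) else 0

/-- `|E(S,T)| = Σ_{u∈S, v∈T} w(u,v)`. -/
def EE (w : Fin N → Fin N → ℝ) (S T : Finset (Fin N)) : ℝ := ∑ u ∈ S, ∑ v ∈ T, w u v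

/-- `|E⁺(S,T)|`: total weight of positive edges from `S` to `T`. -/
def Epos (w sgn : Fin N → Fin N → ℝ) (S T : Finset (Fin N)) : ℝ :=
  ∑ u ∈ S, ∑ v ∈ T, if sgn u v = 1 then w u v else 0

/-- `|E⁻(S,T)|`: total weight of negative edges from `S` to `T`. -/
def Eneg (w sgn : Fin N → Fin N → ℝ) (S T : Finset (Fin N)) : ℝ :=
  ∑ u ∈ S, ∑ v ∈ T, if sgn u v = -1 then w u v else 0

/-- `vol_μ(S) = Σ_{u∈S} μ(u)`. -/
def vol (μ : Fin N → ℝ) (S : Finset (Fin N)) : ℝ := ∑ u ∈ S, μ u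

/-- The signed bipartiteness ratio `β^σ(V₁,V₂)`. -/
def betaR (w sgn : Fin N → Fin N → ℝ) (μ : Fin N → ℝ) (V1 V2 : Finset (Fin N)) : ℝ :=
  (2 * Epos w sgn V1 V2 + Eneg w sgn V1 V1 + Eneg w sgn V2 V2 +
      EE w (V1 ∪ V2) (V1 ∪ V2)ᶜ) / vol μ (V1 ∪ V2)

/-- The signed Cheeger constant `h₁^σ(μ)`: the minimum of `β^σ(V₁,V₂)` over all pairs of
disjoint subsets with nonempty union. -/
def h1 (w sgn : Fin N → Fin N → ℝ) (μ : Fin N → ℝ) : ℝ :=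
  sInf {x | ∃ V1 V2 : Finset (Fin N),
    Disjoint V1 V2 ∧ (V1 ∪ V2).Nonempty ∧ x = betaR w sgn μ V1 V2}


-- ===================== auxiliary lemmas =====================

lemma evals_zero_le {N : ℕ} (hN : 0 < N) {M : Matrix (Fin N) (Fin N) ℝ}
    (hM : M.IsHermitian) (i : Fin N) : evals M ⟨0, hN⟩ ≤ hM.eigenvalues i := by
  rw [evals, dif_pos hM]
  obtain ⟨j, hj⟩ : ∃ j, Tuple.sort hM.eigenvalues j = i :=
    ⟨(Tuple.sort hM.eigenvalues).symm i, by simp⟩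
  rw [← hj]
  exact Tuple.monotone_sort hM.eigenvalues (by exact Fin.mk_le_of_le_val (Nat.zero_le _))

local notation "⟪" x ", " y "⟫" => inner (𝕜 := ℝ) x y

lemma evals_zero_mul_le_quadForm {N : ℕ} (hN : 0 < N) {M : Matrix (Fin N) (Fin N) ℝ}
    (hM : M.IsHermitian) (x : Fin N → ℝ) :
    evals M ⟨0, hN⟩ * (∑ u, x u ^ 2) ≤ ∑ u, x u * M.mulVec x u := by
  classical
  set b := hM.eigenvectorBasis with hb
  have hsymm : ∀ u v, M u v = M v u := by
    intro u v
    have := congrFun (congrFun hM v) u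
    simpa [Matrix.conjTranspose_apply] using this
  let y : EuclideanSpace ℝ (Fin N) := WithLp.toLp 2 x
  let z : EuclideanSpace ℝ (Fin N) := WithLp.toLp 2 (M.mulVec x)
  have h1 : ∑ u, x u * M.mulVec x u = ⟪y, z⟫ := by
    simp [PiLp.inner_apply, RCLike.inner_apply, y, z]
    exact Finset.sum_congr rfl fun u _ => mul_comm _ _
  have h3 : ∀ i, ⟪b i, z⟫ = hM.eigenvalues i * ⟪b i, y⟫ := by
    intro i
    have hmv := hM.mulVec_eigenvectorBasis i
    have : ⟪b i, z⟫ = ∑ u, (b i) u * ∑ v, M u v * x v := by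
      simp [PiLp.inner_apply, RCLike.inner_apply, z, Matrix.mulVec, dotProduct]
      exact Finset.sum_congr rfl fun u _ => mul_comm _ _
    rw [this]
    have swap : ∑ u, (b i) u * ∑ v, M u v * x v = ∑ v, (∑ u, M v u * (b i) u) * x v := by
      simp_rw [Finset.mul_sum, Finset.sum_mul]
      rw [Finset.sum_comm]
      apply Finset.sum_congr rfl; intro v _; apply Finset.sum_congr rfl; intro u _
      rw [hsymm u v]; ring
    rw [swap]
    have : ∀ v, (∑ u, M v u * (b i) u) = hM.eigenvalues i * (b i) v := by
      intro v
      have := congrFun hmv v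
      simpa [Matrix.mulVec, dotProduct] using this
    simp_rw [this]
    simp [PiLp.inner_apply, RCLike.inner_apply, y, Finset.mul_sum]
    apply Finset.sum_congr rfl; intro v _; ring
  have h2 : ⟪y, z⟫ = ∑ i, hM.eigenvalues i * ⟪b i, y⟫ ^ 2 := by
    rw [← b.sum_inner_mul_inner y z]
    apply Finset.sum_congr rfl; intro i _
    rw [h3 i, real_inner_comm y (b i)]; ring
  have h4 : ∑ u, x u ^ 2 = ∑ i, ⟪b i, y⟫ ^ 2 := by
    have := b.sum_inner_mul_inner y y
    have hyy : ⟪y, y⟫ = ∑ u, x u ^ 2 := by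
      rw [PiLp.inner_apply]
      simp [RCLike.inner_apply, y, sq]
    rw [← hyy, ← this]
    apply Finset.sum_congr rfl; intro i _
    rw [real_inner_comm y (b i)]; ring
  rw [h1, h2, h4, Finset.mul_sum]
  apply Finset.sum_le_sum
  intro i _
  exact mul_le_mul_of_nonneg_right (evals_zero_le hN hM i) (sq_nonneg _)

lemma exists_eigvec {N : ℕ} (hN : 0 < N) {M : Matrix (Fin N) (Fin N) ℝ}
    (hM : M.IsHermitian) : ∃ x : Fin N → ℝ,
    (∑ u, x u ^ 2) = 1 ∧ M.mulVec x = fun u => evals M ⟨0, hN⟩ * x u := by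
  set i := Tuple.sort hM.eigenvalues ⟨0, hN⟩ with hi
  refine ⟨⇑(hM.eigenvectorBasis i), ?_, ?_⟩
  · have hn : ‖hM.eigenvectorBasis i‖ = 1 := hM.eigenvectorBasis.orthonormal.1 i
    have : ⟪hM.eigenvectorBasis i, hM.eigenvectorBasis i⟫ = (1:ℝ) := by
      rw [real_inner_self_eq_norm_sq, hn]; norm_num
    rw [PiLp.inner_apply] at this
    simpa [RCLike.inner_apply, sq] using this
  · have := hM.mulVec_eigenvectorBasis i
    rw [evals, dif_pos hM]
    funext u
    have := congrFun this u
    simpa [Matrix.mulVec] using this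

lemma nlapSym_isHermitian (w sgn : Fin N → Fin N → ℝ) (hG : IsWSG w sgn) :
    (nlapSym w sgn).IsHermitian := by
  apply Matrix.ext
  intro u v
  simp only [nlapSym, Matrix.conjTranspose_apply, Matrix.of_apply, star_trivial]
  rw [hG.w_symm v u, hG.sgn_symm v u]
  rcases eq_or_ne u v with h | h
  · subst h; ring
  · rw [if_neg h, if_neg (Ne.symm h)]; ring

lemma sum_w_col (w sgn : Fin N → Fin N → ℝ) (hG : IsWSG w sgn) (v : Fin N) :
    ∑ u, w u v = deg w v := by
  rw [deg]; exact Finset.sum_congr rfl fun u _ => hG.w_symm u v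

lemma quadForm_eq (w sgn : Fin N → Fin N → ℝ) (hd : ∀ u, 0 < deg w u) (f : Fin N → ℝ) :
    ∑ u, (Real.sqrt (deg w u) * f u) *
      (nlapSym w sgn).mulVec (fun v => Real.sqrt (deg w v) * f v) u
    = ∑ u, deg w u * f u ^ 2 - ∑ u, ∑ v, sgn u v * w u v * (f u * f v) := by
  have hs : ∀ u, Real.sqrt (deg w u) ≠ 0 := fun u => (Real.sqrt_pos.2 (hd u)).ne'
  have hmv : ∀ u, (nlapSym w sgn).mulVec (fun v => Real.sqrt (deg w v) * f v) u
      = Real.sqrt (deg w u) * f u - ∑ v, sgn u v * w u v * f v / Real.sqrt (deg w u) := by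
    intro u
    rw [Matrix.mulVec, dotProduct]
    simp only [nlapSym, Matrix.of_apply, sub_mul, ite_mul, one_mul, zero_mul]
    rw [Finset.sum_sub_distrib, Finset.sum_ite_eq]
    simp only [Finset.mem_univ, if_true]
    congr 1
    apply Finset.sum_congr rfl
    intro v _
    field_simp [hs u, hs v]
  have key : ∀ u, (Real.sqrt (deg w u) * f u) *
      (nlapSym w sgn).mulVec (fun v => Real.sqrt (deg w v) * f v) u
      = deg w u * f u ^ 2 - ∑ v, sgn u v * w u v * (f u * f v) := by
    intro u
    rw [hmv u, mul_sub, Finset.mul_sum]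
    congr 1
    · have h := Real.mul_self_sqrt (hd u).le
      linear_combination f u ^ 2 * h
    · apply Finset.sum_congr rfl
      intro v _
      field_simp [hs u]
  rw [Finset.sum_congr rfl fun u _ => key u, Finset.sum_sub_distrib]

lemma Q_expand (w sgn : Fin N → Fin N → ℝ) (hG : IsWSG w sgn) (f : Fin N → ℝ) :
    ∑ u, ∑ v, w u v * (f u - sgn u v * f v) ^ 2
    = 2 * (∑ u, deg w u * f u ^ 2 - ∑ u, ∑ v, sgn u v * w u v * (f u * f v)) := by
  have term : ∀ u v, w u v * (f u - sgn u v * f v) ^ 2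
      = w u v * f u ^ 2 + w u v * f v ^ 2 - 2 * (sgn u v * w u v * (f u * f v)) := by
    intro u v
    have hσ : sgn u v ^ 2 = 1 := by
      rcases hG.sgn_pm u v with h | h <;> rw [h] <;> norm_num
    linear_combination w u v * f v ^ 2 * hσ
  calc ∑ u, ∑ v, w u v * (f u - sgn u v * f v) ^ 2
      = ∑ u, ∑ v, (w u v * f u ^ 2 + w u v * f v ^ 2
          - 2 * (sgn u v * w u v * (f u * f v))) := by
        exact Finset.sum_congr rfl fun u _ => Finset.sum_congr rfl fun v _ => term u v
    _ = (∑ u, ∑ v, w u v * f u ^ 2) + (∑ u, ∑ v, w u v * f v ^ 2)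
        - 2 * ∑ u, ∑ v, sgn u v * w u v * (f u * f v) := by
        simp [Finset.sum_sub_distrib, Finset.sum_add_distrib, Finset.mul_sum]
    _ = 2 * (∑ u, deg w u * f u ^ 2 - ∑ u, ∑ v, sgn u v * w u v * (f u * f v)) := by
        have h1 : (∑ u, ∑ v, w u v * f u ^ 2) = ∑ u, deg w u * f u ^ 2 := by
          apply Finset.sum_congr rfl; intro u _
          rw [← Finset.sum_mul, deg]
        have h2 : (∑ u, ∑ v, w u v * f v ^ 2) = ∑ u, deg w u * f u ^ 2 := by
          rw [Finset.sum_comm]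
          apply Finset.sum_congr rfl; intro v _
          rw [← Finset.sum_mul, sum_w_col w sgn hG v]
        rw [h1, h2]; ring

lemma sumIf2 (S T : Finset (Fin N)) (F : Fin N → Fin N → ℝ) :
    ∑ u ∈ S, ∑ v ∈ T, F u v = ∑ u, ∑ v, if u ∈ S ∧ v ∈ T then F u v else 0 := by
  rw [eq_comm]
  calc ∑ u, ∑ v, (if u ∈ S ∧ v ∈ T then F u v else 0)
      = ∑ u, (if u ∈ S then ∑ v, (if v ∈ T then F u v else 0) else 0) := by
        apply Finset.sum_congr rfl; intro u _
        by_cases h : u ∈ S <;> simp [h]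
    _ = ∑ u ∈ S, ∑ v, (if v ∈ T then F u v else 0) := by
        rw [Finset.sum_ite_mem, Finset.univ_inter]
    _ = ∑ u ∈ S, ∑ v ∈ T, F u v := by
        apply Finset.sum_congr rfl; intro u _
        rw [Finset.sum_ite_mem, Finset.univ_inter]

lemma Epos_comm (w sgn : Fin N → Fin N → ℝ) (hG : IsWSG w sgn) (V1 V2 : Finset (Fin N)) :
    Epos w sgn V1 V2 = Epos w sgn V2 V1 := by
  rw [Epos, Epos, Finset.sum_comm]
  apply Finset.sum_congr rfl; intro v _
  apply Finset.sum_congr rfl; intro u _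
  rw [hG.w_symm u v, hG.sgn_symm u v]

lemma EE_comm (w sgn : Fin N → Fin N → ℝ) (hG : IsWSG w sgn) (S T : Finset (Fin N)) :
    EE w S T = EE w T S := by
  rw [EE, EE, Finset.sum_comm]
  apply Finset.sum_congr rfl; intro v _
  apply Finset.sum_congr rfl; intro u _
  exact hG.w_symm u v

lemma easy_pair (w sgn : Fin N → Fin N → ℝ) (hG : IsWSG w sgn)
    (V1 V2 : Finset (Fin N)) (hdisj : Disjoint V1 V2) :
    ∑ u, ∑ v, w u v * ((if u ∈ V1 then (1:ℝ) else if u ∈ V2 then -1 else 0)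
        - sgn u v * (if v ∈ V1 then (1:ℝ) else if v ∈ V2 then -1 else 0)) ^ 2
    ≤ 4 * (2 * Epos w sgn V1 V2 + Eneg w sgn V1 V1 + Eneg w sgn V2 V2 +
        EE w (V1 ∪ V2) (V1 ∪ V2)ᶜ) := by
  have hrw : 4 * (2 * Epos w sgn V1 V2 + Eneg w sgn V1 V1 + Eneg w sgn V2 V2 +
        EE w (V1 ∪ V2) (V1 ∪ V2)ᶜ)
      = ∑ u, ∑ v,
        (4 * (if u ∈ V1 ∧ v ∈ V2 then (if sgn u v = 1 then w u v else 0) else 0)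
        + 4 * (if u ∈ V2 ∧ v ∈ V1 then (if sgn u v = 1 then w u v else 0) else 0)
        + 4 * (if u ∈ V1 ∧ v ∈ V1 then (if sgn u v = -1 then w u v else 0) else 0)
        + 4 * (if u ∈ V2 ∧ v ∈ V2 then (if sgn u v = -1 then w u v else 0) else 0)
        + 2 * (if u ∈ V1 ∪ V2 ∧ v ∈ (V1 ∪ V2)ᶜ then w u v else 0)
        + 2 * (if u ∈ (V1 ∪ V2)ᶜ ∧ v ∈ V1 ∪ V2 then w u v else 0)) := by
    have e1 : 2 * Epos w sgn V1 V2 = Epos w sgn V1 V2 + Epos w sgn V2 V1 := by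
      rw [← Epos_comm w sgn hG]; ring
    have e2 : EE w (V1 ∪ V2) (V1 ∪ V2)ᶜ
        = (EE w (V1 ∪ V2) (V1 ∪ V2)ᶜ + EE w (V1 ∪ V2)ᶜ (V1 ∪ V2)) / 2 := by
      rw [← EE_comm w sgn hG]; ring
    rw [e1, e2, Epos, Epos, Eneg, Eneg, EE, EE,
      sumIf2 V1 V2, sumIf2 V2 V1, sumIf2 V1 V1, sumIf2 V2 V2,
      sumIf2 (V1 ∪ V2) (V1 ∪ V2)ᶜ, sumIf2 (V1 ∪ V2)ᶜ (V1 ∪ V2)]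
    simp only [mul_add, Finset.mul_sum, Finset.sum_div, ← Finset.sum_add_distrib]
    apply Finset.sum_congr rfl; intro u _
    apply Finset.sum_congr rfl; intro v _
    ring
  rw [hrw]
  apply Finset.sum_le_sum; intro u _
  apply Finset.sum_le_sum; intro v _
  have hw := hG.w_nonneg u v
  by_cases h1 : u ∈ V1 <;> by_cases h2 : u ∈ V2 <;>
    by_cases h3 : v ∈ V1 <;> by_cases h4 : v ∈ V2 <;>
    first
      | (exact absurd h2 (Finset.disjoint_left.1 hdisj h1))
      | (exact absurd h4 (Finset.disjoint_left.1 hdisj h3))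
      | (rcases hG.sgn_pm u v with hs | hs <;>
          simp only [h1, h2, h3, h4, hs, Finset.mem_union, Finset.mem_compl,
            if_true, if_false, and_true, and_false, true_and, false_and, or_self,
            not_true, not_false_iff, or_true, true_or, or_false, false_or] <;>
          norm_num <;> nlinarith [hw])

def chi (a : ℝ) : ℝ → ℝ := fun s => if s ≤ a then 1 else 0

lemma chi_eq_indicator (a : ℝ) : chi a = Set.indicator (Set.Iic a) (fun _ => (1:ℝ)) := by
  funext s
  rw [chi, Set.indicator_apply]
  simp [Set.mem_Iic]

lemma integrableOn_chi (a : ℝ) :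
    MeasureTheory.IntegrableOn (chi a) (Set.Ioc 0 1) MeasureTheory.volume := by
  rw [chi_eq_indicator]
  exact (MeasureTheory.integrableOn_const measure_Ioc_lt_top.ne).indicator
    measurableSet_Iic

lemma integral_chi {a : ℝ} (h0 : 0 ≤ a) (h1 : a ≤ 1) :
    ∫ s in Set.Ioc (0:ℝ) 1, chi a s = a := by
  have : (fun s => chi a s) = Set.indicator (Set.Iic a) (fun _ => (1:ℝ)) := chi_eq_indicator a
  rw [this, MeasureTheory.integral_indicator measurableSet_Iic]
  rw [MeasureTheory.setIntegral_const, MeasureTheory.measureReal_restrict_apply measurableSet_Iic]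
  have hset : Set.Iic a ∩ Set.Ioc 0 1 = Set.Ioc 0 a := by
    ext x
    simp only [Set.mem_inter_iff, Set.mem_Iic, Set.mem_Ioc]
    constructor
    · rintro ⟨hx, h0x, _⟩; exact ⟨h0x, hx⟩
    · rintro ⟨h0x, hxa⟩; exact ⟨hxa, h0x, le_trans hxa h1⟩
  rw [hset, Real.volume_real_Ioc]
  simp [h0]

lemma integrableOn_comb (k1 k2 k3 p q r : ℝ) :
    MeasureTheory.IntegrableOn (fun s => k1 * chi p s + k2 * chi q s + k3 * chi r s)
      (Set.Ioc 0 1) MeasureTheory.volume := by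
  exact (((integrableOn_chi p).const_mul k1).add
    ((integrableOn_chi q).const_mul k2)).add ((integrableOn_chi r).const_mul k3)

lemma integral_comb {k1 k2 k3 p q r : ℝ} (hp : 0 ≤ p) (hp1 : p ≤ 1) (hq : 0 ≤ q)
    (hq1 : q ≤ 1) (hr : 0 ≤ r) (hr1 : r ≤ 1) :
    ∫ s in Set.Ioc (0:ℝ) 1, (k1 * chi p s + k2 * chi q s + k3 * chi r s)
      = k1 * p + k2 * q + k3 * r := by
  have h1 : MeasureTheory.IntegrableOn (fun s => k1 * chi p s)
      (Set.Ioc 0 1) MeasureTheory.volume := by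
    exact (integrableOn_chi p).const_mul k1
  have h2 : MeasureTheory.IntegrableOn (fun s => k2 * chi q s)
      (Set.Ioc 0 1) MeasureTheory.volume := by
    exact (integrableOn_chi q).const_mul k2
  have h3 : MeasureTheory.IntegrableOn (fun s => k3 * chi r s)
      (Set.Ioc 0 1) MeasureTheory.volume := by
    exact (integrableOn_chi r).const_mul k3
  have h12 : MeasureTheory.IntegrableOn (fun s => k1 * chi p s + k2 * chi q s)
      (Set.Ioc 0 1) MeasureTheory.volume := by
    exact h1.add h2
  rw [MeasureTheory.integral_add h12 h3, MeasureTheory.integral_add h1 h2,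
    MeasureTheory.integral_const_mul, MeasureTheory.integral_const_mul,
    MeasureTheory.integral_const_mul, integral_chi hp hp1, integral_chi hq hq1,
    integral_chi hr hr1]

lemma key_pair (x y σ : ℝ) (hσ : σ = 1 ∨ σ = -1) :
    ((if (σ = 1 ∧ x * y < 0) ∨ (σ = -1 ∧ 0 < x * y) then (1:ℝ) else 0) - 1)
        * min (x ^ 2) (y ^ 2) + x ^ 2 / 2 + y ^ 2 / 2
      ≤ |x - σ * y| * (|x| + |y|) / 2 := by
  split_ifs with hc
  · have habs : |x - σ * y| = |x| + |y| := by
      rcases hc with ⟨h, hxy⟩ | ⟨h, hxy⟩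
      · subst h
        rcases mul_neg_iff.1 hxy with ⟨hx, hy⟩ | ⟨hx, hy⟩
        · rw [abs_of_pos hx, abs_of_neg hy, one_mul, abs_of_pos (by linarith)]; ring
        · rw [abs_of_neg hx, abs_of_pos hy, one_mul, abs_of_neg (by linarith)]; ring
      · subst h
        rcases mul_pos_iff.1 hxy with ⟨hx, hy⟩ | ⟨hx, hy⟩
        · rw [abs_of_pos hx, abs_of_pos hy, abs_of_pos (by nlinarith)]; ring
        · rw [abs_of_neg hx, abs_of_neg hy, abs_of_neg (by nlinarith)]; ring
    rw [habs]
    have := mul_nonneg (abs_nonneg x) (abs_nonneg y)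
    nlinarith [sq_abs x, sq_abs y, min_le_left (x ^ 2) (y ^ 2)]
  · have h1 : |x ^ 2 - y ^ 2| = |x - σ * y| * |x + σ * y| := by
      rcases hσ with h | h <;> subst h <;> rw [← abs_mul] <;> congr 1 <;> ring
    have h2 : |x + σ * y| ≤ |x| + |y| := by
      rcases hσ with h | h <;> subst h
      · simpa using abs_add_le x y
      · simpa [sub_eq_add_neg] using abs_add_le x (-y)
    have h3 : |x ^ 2 - y ^ 2| ≤ |x - σ * y| * (|x| + |y|) := by
      rw [h1]
      exact mul_le_mul_of_nonneg_left h2 (abs_nonneg _)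
    rcases le_total (x ^ 2) (y ^ 2) with h | h
    · rw [min_eq_left h] at *
      rw [abs_of_nonpos (by linarith)] at h3
      linarith
    · rw [min_eq_right h] at *
      rw [abs_of_nonneg (by linarith)] at h3
      linarith

lemma pair_decomp (wuv σuv x y s : ℝ) (hs : 0 < s) (hσ : σuv = 1 ∨ σuv = -1) :
    (if (0 < x ∧ s ≤ x ^ 2) ∧ (y < 0 ∧ s ≤ y ^ 2) then (if σuv = 1 then wuv else 0) else 0)
  + (if (x < 0 ∧ s ≤ x ^ 2) ∧ (0 < y ∧ s ≤ y ^ 2) then (if σuv = 1 then wuv else 0) else 0)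
  + (if (0 < x ∧ s ≤ x ^ 2) ∧ (0 < y ∧ s ≤ y ^ 2) then (if σuv = -1 then wuv else 0) else 0)
  + (if (x < 0 ∧ s ≤ x ^ 2) ∧ (y < 0 ∧ s ≤ y ^ 2) then (if σuv = -1 then wuv else 0) else 0)
  + (if (((0 < x ∧ s ≤ x ^ 2) ∨ (x < 0 ∧ s ≤ x ^ 2)))
        ∧ ¬(((0 < y ∧ s ≤ y ^ 2) ∨ (y < 0 ∧ s ≤ y ^ 2))) then wuv else 0) / 2
  + (if ¬(((0 < x ∧ s ≤ x ^ 2) ∨ (x < 0 ∧ s ≤ x ^ 2)))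
        ∧ (((0 < y ∧ s ≤ y ^ 2) ∨ (y < 0 ∧ s ≤ y ^ 2))) then wuv else 0) / 2
  = (wuv * ((if (σuv = 1 ∧ x * y < 0) ∨ (σuv = -1 ∧ 0 < x * y) then (1:ℝ) else 0) - 1))
      * chi (min (x ^ 2) (y ^ 2)) s
    + (wuv / 2) * chi (x ^ 2) s + (wuv / 2) * chi (y ^ 2) s := by
  have trich : ∀ z : ℝ, s ≤ z ^ 2 → (0 < z ∨ z < 0) := by
    intro z hz
    rcases lt_trichotomy z 0 with h | h | h
    · exact Or.inr h
    · exfalso; rw [h] at hz; nlinarith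
    · exact Or.inl h
  by_cases h1 : s ≤ x ^ 2 <;> by_cases h2 : s ≤ y ^ 2
  · have hx := trich x h1
    have hy := trich y h2
    rcases hx with hx | hx <;> rcases hy with hy | hy
    · have hp : 0 < x * y := mul_pos hx hy
      rcases hσ with hσ | hσ <;>
        simp [chi, le_min_iff, h1, h2, hσ, asymm hx, asymm hy, asymm hp, hp,
          not_le.2 hx, not_le.2 hy] <;> (try norm_num) <;> (try ring)
    · have hp : x * y < 0 := mul_neg_of_pos_of_neg hx hy
      rcases hσ with hσ | hσ <;>
        simp [chi, le_min_iff, h1, h2, hσ, asymm hx, asymm hy, asymm hp, hp,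
          not_le.2 hx, not_le.2 hy] <;> (try norm_num) <;> (try ring)
    · have hp : x * y < 0 := mul_neg_of_neg_of_pos hx hy
      rcases hσ with hσ | hσ <;>
        simp [chi, le_min_iff, h1, h2, hσ, asymm hx, asymm hy, asymm hp, hp,
          not_le.2 hx, not_le.2 hy] <;> (try norm_num) <;> (try ring)
    · have hp : 0 < x * y := mul_pos_of_neg_of_neg hx hy
      rcases hσ with hσ | hσ <;>
        simp [chi, le_min_iff, h1, h2, hσ, asymm hx, asymm hy, asymm hp, hp,
          not_le.2 hx, not_le.2 hy] <;> (try norm_num) <;> (try ring)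
  · have hx := trich x h1
    simp [chi, le_min_iff, h1, h2, hx]
  · have hy := trich y h2
    simp [chi, le_min_iff, h1, h2, hy]
  · simp [chi, le_min_iff, h1, h2]

lemma hard_pair {N : ℕ} (w sgn : Fin N → Fin N → ℝ) (hG : IsWSG w sgn)
    (hd : ∀ u, 0 < deg w u) (lam : ℝ) (f : Fin N → ℝ)
    (hQ : ∑ u, ∑ v, w u v * (f u - sgn u v * f v) ^ 2 = 2 * lam * ∑ u, deg w u * f u ^ 2)
    (hle : ∀ u, f u ^ 2 ≤ 1) (ustar : Fin N) (hustar : f ustar ^ 2 = 1) :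
    ∃ V1 V2 : Finset (Fin N), Disjoint V1 V2 ∧ (V1 ∪ V2).Nonempty ∧
      betaR w sgn (deg w) V1 V2 ≤ Real.sqrt (2 * lam) := by
  classical
  have hfstar : f ustar ≠ 0 := by
    intro h; rw [h] at hustar; norm_num at hustar
  set T : ℝ := ∑ u, deg w u * f u ^ 2 with hT
  have hTnn : 0 ≤ T := Finset.sum_nonneg fun u _ => mul_nonneg (hd u).le (sq_nonneg _)
  have hTpos : 0 < T := by
    have h1 : deg w ustar * f ustar ^ 2 ≤ T :=
      Finset.single_le_sum (f := fun u => deg w u * f u ^ 2)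
        (fun u _ => mul_nonneg (hd u).le (sq_nonneg _)) (Finset.mem_univ ustar)
    rw [hustar, mul_one] at h1
    exact lt_of_lt_of_le (hd ustar) h1
  have hlam : 0 ≤ lam := by
    have hQnn : 0 ≤ ∑ u, ∑ v, w u v * (f u - sgn u v * f v) ^ 2 :=
      Finset.sum_nonneg fun u _ => Finset.sum_nonneg fun v _ =>
        mul_nonneg (hG.w_nonneg u v) (sq_nonneg _)
    nlinarith
  set κ := Real.sqrt (2 * lam) with hκ
  have hκnn : 0 ≤ κ := Real.sqrt_nonneg _
  set c1 : Fin N → Fin N → ℝ := fun u v =>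
    if (sgn u v = 1 ∧ f u * f v < 0) ∨ (sgn u v = -1 ∧ 0 < f u * f v) then 1 else 0
    with hc1def
  set F : Fin N × Fin N → ℝ → ℝ := fun p s =>
    (w p.1 p.2 * (c1 p.1 p.2 - 1)) * chi (min (f p.1 ^ 2) (f p.2 ^ 2)) s
      + (w p.1 p.2 / 2) * chi (f p.1 ^ 2) s + (w p.1 p.2 / 2) * chi (f p.2 ^ 2) s
    with hFdef
  set numG : ℝ → ℝ := fun s => ∑ p : Fin N × Fin N, F p s with hnumGdef
  set volG : ℝ → ℝ := fun s => ∑ u, deg w u * chi (f u ^ 2) s with hvolGdef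
  set W1 : ℝ → Finset (Fin N) := fun s => univ.filter fun u => 0 < f u ∧ s ≤ f u ^ 2
    with hW1def
  set W2 : ℝ → Finset (Fin N) := fun s => univ.filter fun u => f u < 0 ∧ s ≤ f u ^ 2
    with hW2def
  -- integrability
  have hFint : ∀ p : Fin N × Fin N,
      MeasureTheory.IntegrableOn (F p) (Set.Ioc 0 1) MeasureTheory.volume := by
    intro p; rw [hFdef]; exact integrableOn_comb _ _ _ _ _ _
  have hnumGint : MeasureTheory.IntegrableOn numG (Set.Ioc 0 1) MeasureTheory.volume := by
    rw [hnumGdef]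
    exact MeasureTheory.integrable_finset_sum _ (fun p _ => hFint p)
  have hvolGterm : ∀ u : Fin N, MeasureTheory.IntegrableOn
      (fun s => deg w u * chi (f u ^ 2) s) (Set.Ioc 0 1) MeasureTheory.volume :=
    fun u => (integrableOn_chi _).const_mul _
  have hvolGint : MeasureTheory.IntegrableOn volG (Set.Ioc 0 1) MeasureTheory.volume := by
    rw [hvolGdef]
    exact MeasureTheory.integrable_finset_sum _ (fun u _ => hvolGterm u)
  -- integrals
  have hminnn : ∀ p : Fin N × Fin N, 0 ≤ min (f p.1 ^ 2) (f p.2 ^ 2) :=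
    fun p => le_min (sq_nonneg _) (sq_nonneg _)
  have hminle : ∀ p : Fin N × Fin N, min (f p.1 ^ 2) (f p.2 ^ 2) ≤ 1 :=
    fun p => le_trans (min_le_left _ _) (hle p.1)
  have hnumGI : ∫ s in Set.Ioc (0:ℝ) 1, numG s
      = ∑ p : Fin N × Fin N, ((w p.1 p.2 * (c1 p.1 p.2 - 1)) * min (f p.1 ^ 2) (f p.2 ^ 2)
          + (w p.1 p.2 / 2) * f p.1 ^ 2 + (w p.1 p.2 / 2) * f p.2 ^ 2) := by
    rw [hnumGdef, MeasureTheory.integral_finset_sum _ (fun p _ => hFint p)]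
    apply Finset.sum_congr rfl; intro p _
    rw [hFdef]
    exact integral_comb (hminnn p) (hminle p) (sq_nonneg _) (hle p.1) (sq_nonneg _) (hle p.2)
  have hvolGI : ∫ s in Set.Ioc (0:ℝ) 1, volG s = T := by
    rw [hvolGdef, MeasureTheory.integral_finset_sum _ (fun u _ => hvolGterm u), hT]
    apply Finset.sum_congr rfl; intro u _
    rw [MeasureTheory.integral_const_mul, integral_chi (sq_nonneg _) (hle u)]
  -- Cauchy-Schwarz bound on the integral of numG
  have hslice : ∑ p : Fin N × Fin N, ((w p.1 p.2 * (c1 p.1 p.2 - 1)) * min (f p.1 ^ 2) (f p.2 ^ 2)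
          + (w p.1 p.2 / 2) * f p.1 ^ 2 + (w p.1 p.2 / 2) * f p.2 ^ 2) ≤ κ * T := by
    have stepA : ∀ p : Fin N × Fin N,
        (w p.1 p.2 * (c1 p.1 p.2 - 1)) * min (f p.1 ^ 2) (f p.2 ^ 2)
          + (w p.1 p.2 / 2) * f p.1 ^ 2 + (w p.1 p.2 / 2) * f p.2 ^ 2
        ≤ w p.1 p.2 * (|f p.1 - sgn p.1 p.2 * f p.2| * (|f p.1| + |f p.2|)) / 2 := by
      intro p
      have hk := key_pair (f p.1) (f p.2) (sgn p.1 p.2) (hG.sgn_pm p.1 p.2)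
      have hw := hG.w_nonneg p.1 p.2
      rw [hc1def]
      nlinarith [mul_le_mul_of_nonneg_left hk hw]
    have sumA := Finset.sum_le_sum (s := (Finset.univ : Finset (Fin N × Fin N)))
      (fun p _ => stepA p)
    set Sfg : ℝ := ∑ p : Fin N × Fin N,
      w p.1 p.2 * (|f p.1 - sgn p.1 p.2 * f p.2| * (|f p.1| + |f p.2|)) with hSfg
    have hSfgnn : 0 ≤ Sfg :=
      Finset.sum_nonneg fun p _ => mul_nonneg (hG.w_nonneg p.1 p.2)
        (mul_nonneg (abs_nonneg _) (by positivity))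
    have hX : ∑ p : Fin N × Fin N, w p.1 p.2 * (f p.1 - sgn p.1 p.2 * f p.2) ^ 2
        = 2 * lam * T := by
      rw [← hQ, Fintype.sum_prod_type]
    have hY : ∑ p : Fin N × Fin N, w p.1 p.2 * (|f p.1| + |f p.2|) ^ 2 ≤ 4 * T := by
      have step : ∀ p : Fin N × Fin N, w p.1 p.2 * (|f p.1| + |f p.2|) ^ 2
          ≤ w p.1 p.2 * (2 * f p.1 ^ 2 + 2 * f p.2 ^ 2) := by
        intro p
        apply mul_le_mul_of_nonneg_left _ (hG.w_nonneg p.1 p.2)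
        nlinarith [sq_abs (f p.1), sq_abs (f p.2), sq_nonneg (|f p.1| - |f p.2|)]
      have h1 := Finset.sum_le_sum (s := (Finset.univ : Finset (Fin N × Fin N)))
        (fun p _ => step p)
      have h2 : ∑ p : Fin N × Fin N, w p.1 p.2 * (2 * f p.1 ^ 2 + 2 * f p.2 ^ 2) = 4 * T := by
        rw [Fintype.sum_prod_type]
        have e1 : ∀ u : Fin N, ∑ v, w u v * (2 * f u ^ 2 + 2 * f v ^ 2)
            = 2 * deg w u * f u ^ 2 + ∑ v, 2 * w u v * f v ^ 2 := by
          intro u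
          rw [show (2:ℝ) * deg w u * f u ^ 2 = ∑ v, 2 * w u v * f u ^ 2 by
            rw [deg, Finset.mul_sum, Finset.sum_mul]]
          rw [← Finset.sum_add_distrib]
          apply Finset.sum_congr rfl; intro v _; ring
        rw [Finset.sum_congr rfl fun u _ => e1 u, Finset.sum_add_distrib]
        have e2 : ∑ u : Fin N, ∑ v, 2 * w u v * f v ^ 2 = 2 * T := by
          rw [Finset.sum_comm, hT, Finset.mul_sum]
          apply Finset.sum_congr rfl; intro v _
          rw [show ∑ u : Fin N, 2 * w u v * f v ^ 2 = 2 * (∑ u, w u v) * f v ^ 2 by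
            rw [Finset.mul_sum, Finset.sum_mul]]
          rw [sum_w_col w sgn hG v]; ring
        have e3 : ∑ u : Fin N, 2 * deg w u * f u ^ 2 = 2 * T := by
          rw [hT, Finset.mul_sum]; apply Finset.sum_congr rfl; intro u _; ring
        rw [e2, e3]; ring
      linarith
    have hCS : Sfg ^ 2 ≤ (2 * lam * T) * (4 * T) := by
      have hcs := Finset.sum_mul_sq_le_sq_mul_sq Finset.univ
        (fun p : Fin N × Fin N => Real.sqrt (w p.1 p.2) * |f p.1 - sgn p.1 p.2 * f p.2|)
        (fun p : Fin N × Fin N => Real.sqrt (w p.1 p.2) * (|f p.1| + |f p.2|))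
      have e1 : ∑ p : Fin N × Fin N,
          (Real.sqrt (w p.1 p.2) * |f p.1 - sgn p.1 p.2 * f p.2|)
            * (Real.sqrt (w p.1 p.2) * (|f p.1| + |f p.2|)) = Sfg := by
        rw [hSfg]; apply Finset.sum_congr rfl; intro p _
        rw [show (Real.sqrt (w p.1 p.2) * |f p.1 - sgn p.1 p.2 * f p.2|)
            * (Real.sqrt (w p.1 p.2) * (|f p.1| + |f p.2|))
          = (Real.sqrt (w p.1 p.2) * Real.sqrt (w p.1 p.2))
            * (|f p.1 - sgn p.1 p.2 * f p.2| * (|f p.1| + |f p.2|)) by ring]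
        rw [Real.mul_self_sqrt (hG.w_nonneg p.1 p.2)]
      have e2 : ∑ p : Fin N × Fin N,
          (Real.sqrt (w p.1 p.2) * |f p.1 - sgn p.1 p.2 * f p.2|) ^ 2
          = ∑ p : Fin N × Fin N, w p.1 p.2 * (f p.1 - sgn p.1 p.2 * f p.2) ^ 2 := by
        apply Finset.sum_congr rfl; intro p _
        rw [mul_pow, Real.sq_sqrt (hG.w_nonneg p.1 p.2), sq_abs]
      have e3 : ∑ p : Fin N × Fin N,
          (Real.sqrt (w p.1 p.2) * (|f p.1| + |f p.2|)) ^ 2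
          = ∑ p : Fin N × Fin N, w p.1 p.2 * (|f p.1| + |f p.2|) ^ 2 := by
        apply Finset.sum_congr rfl; intro p _
        rw [mul_pow, Real.sq_sqrt (hG.w_nonneg p.1 p.2)]
      rw [e1, e2, e3] at hcs
      calc Sfg ^ 2 ≤ (2 * lam * T) * (∑ p : Fin N × Fin N, w p.1 p.2 * (|f p.1| + |f p.2|) ^ 2) := by
            rw [← hX]; exact hcs
        _ ≤ (2 * lam * T) * (4 * T) := by
            apply mul_le_mul_of_nonneg_left hY
            have : 0 ≤ 2 * lam * T := by positivity
            exact this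
    have hSfgle : Sfg ≤ κ * (2 * T) := by
      have hrhs : 0 ≤ Real.sqrt (2 * lam) * (2 * T) := by positivity
      have h2 : Sfg ^ 2 ≤ (Real.sqrt (2 * lam) * (2 * T)) ^ 2 := by
        rw [mul_pow, Real.sq_sqrt (by linarith : (0:ℝ) ≤ 2 * lam)]
        linarith [hCS]
      have h1 : Sfg ≤ Real.sqrt (2 * lam) * (2 * T) := by
        have h3 := Real.sqrt_le_sqrt h2
        rwa [Real.sqrt_sq hSfgnn, Real.sqrt_sq hrhs] at h3
      rw [hκ]
      exact h1
    calc ∑ p : Fin N × Fin N, ((w p.1 p.2 * (c1 p.1 p.2 - 1)) * min (f p.1 ^ 2) (f p.2 ^ 2)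
          + (w p.1 p.2 / 2) * f p.1 ^ 2 + (w p.1 p.2 / 2) * f p.2 ^ 2)
        ≤ ∑ p : Fin N × Fin N,
            w p.1 p.2 * (|f p.1 - sgn p.1 p.2 * f p.2| * (|f p.1| + |f p.2|)) / 2 := sumA
      _ = Sfg / 2 := by rw [hSfg, ← Finset.sum_div]
      _ ≤ κ * T := by linarith
  -- pointwise identification of numG/volG with the combinatorial quantities
  have hnum_eq : ∀ s : ℝ, 0 < s →
      2 * Epos w sgn (W1 s) (W2 s) + Eneg w sgn (W1 s) (W1 s) + Eneg w sgn (W2 s) (W2 s)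
        + EE w (W1 s ∪ W2 s) (W1 s ∪ W2 s)ᶜ = numG s := by
    intro s hs
    have e1 : 2 * Epos w sgn (W1 s) (W2 s)
        = Epos w sgn (W1 s) (W2 s) + Epos w sgn (W2 s) (W1 s) := by
      rw [← Epos_comm w sgn hG]; ring
    have e2 : EE w (W1 s ∪ W2 s) (W1 s ∪ W2 s)ᶜ
        = (EE w (W1 s ∪ W2 s) (W1 s ∪ W2 s)ᶜ) / 2 + (EE w (W1 s ∪ W2 s)ᶜ (W1 s ∪ W2 s)) / 2 := by
      rw [← EE_comm w sgn hG]; ring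
    rw [e1, e2, Epos, Epos, Eneg, Eneg, EE, EE,
      sumIf2 (W1 s) (W2 s), sumIf2 (W2 s) (W1 s), sumIf2 (W1 s) (W1 s), sumIf2 (W2 s) (W2 s),
      sumIf2 (W1 s ∪ W2 s) (W1 s ∪ W2 s)ᶜ, sumIf2 (W1 s ∪ W2 s)ᶜ (W1 s ∪ W2 s)]
    simp only [hnumGdef]
    rw [Fintype.sum_prod_type]
    simp only [Finset.sum_div, ← Finset.sum_add_distrib]
    apply Finset.sum_congr rfl; intro u _
    apply Finset.sum_congr rfl; intro v _
    have hpd := pair_decomp (w u v) (sgn u v) (f u) (f v) s hs (hG.sgn_pm u v)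
    simp only [hW1def, hW2def, hFdef, hc1def, Finset.mem_union, Finset.mem_compl,
      Finset.mem_filter, Finset.mem_univ, true_and]
    linarith [hpd]
  have hvol_eq : ∀ s : ℝ, 0 < s → vol (deg w) (W1 s ∪ W2 s) = volG s := by
    intro s hs
    have hset : W1 s ∪ W2 s = univ.filter (fun u => s ≤ f u ^ 2) := by
      ext u
      simp only [hW1def, hW2def, Finset.mem_union, Finset.mem_filter, Finset.mem_univ, true_and]
      constructor
      · rintro (⟨_, h⟩ | ⟨_, h⟩) <;> exact h
      · intro h
        rcases lt_trichotomy (f u) 0 with h' | h' | h'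
        · exact Or.inr ⟨h', h⟩
        · exfalso; rw [h'] at h; norm_num at h; linarith
        · exact Or.inl ⟨h', h⟩
    rw [vol, hset, Finset.sum_filter]
    simp only [hvolGdef]
    apply Finset.sum_congr rfl; intro u _
    rw [chi]
    by_cases h : s ≤ f u ^ 2 <;> simp [h]
  -- choose the optimal threshold
  obtain ⟨u0, hu0m, hu0min⟩ := Finset.exists_min_image (univ.filter fun u => f u ≠ 0)
    (fun u => numG (f u ^ 2) - κ * volG (f u ^ 2))
    ⟨ustar, Finset.mem_filter.2 ⟨Finset.mem_univ _, hfstar⟩⟩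
  have hfu0 : f u0 ≠ 0 := (Finset.mem_filter.1 hu0m).2
  set sstar : ℝ := f u0 ^ 2 with hsstardef
  have hsstar0 : 0 < sstar := pow_two_pos_of_ne_zero hfu0
  have hsstar1 : sstar ≤ 1 := hle u0
  have hmono : ∀ s, s ∈ Set.Ioc (0:ℝ) 1 →
      numG sstar - κ * volG sstar ≤ numG s - κ * volG s := by
    intro s hsIoc
    obtain ⟨u1, hu1m, hu1min⟩ := Finset.exists_min_image (univ.filter fun u => s ≤ f u ^ 2)
      (fun u => f u ^ 2)
      ⟨ustar, Finset.mem_filter.2 ⟨Finset.mem_univ _, by rw [hustar]; exact hsIoc.2⟩⟩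
    have hu1s : s ≤ f u1 ^ 2 := (Finset.mem_filter.1 hu1m).2
    have hiffv : ∀ v : Fin N, (s ≤ f v ^ 2) ↔ (f u1 ^ 2 ≤ f v ^ 2) := by
      intro v
      constructor
      · intro h; exact hu1min v (Finset.mem_filter.2 ⟨Finset.mem_univ _, h⟩)
      · intro h; exact le_trans hu1s h
    have hchi1 : ∀ v : Fin N, chi (f v ^ 2) s = chi (f v ^ 2) (f u1 ^ 2) := by
      intro v; rw [chi, chi]
      by_cases h : s ≤ f v ^ 2
      · rw [if_pos h, if_pos ((hiffv v).1 h)]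
      · rw [if_neg h, if_neg (fun hc => h ((hiffv v).2 hc))]
    have hchi2 : ∀ u v : Fin N, chi (min (f u ^ 2) (f v ^ 2)) s
        = chi (min (f u ^ 2) (f v ^ 2)) (f u1 ^ 2) := by
      intro u v; rw [chi, chi]
      by_cases h : s ≤ min (f u ^ 2) (f v ^ 2)
      · rw [if_pos h]
        rw [le_min_iff] at h
        rw [if_pos (le_min_iff.2 ⟨(hiffv u).1 h.1, (hiffv v).1 h.2⟩)]
      · rw [if_neg h]
        rw [if_neg]
        intro hc
        rw [le_min_iff] at hc h
        exact h ⟨(hiffv u).2 hc.1, (hiffv v).2 hc.2⟩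
    have hnumG_eq : numG s = numG (f u1 ^ 2) := by
      simp only [hnumGdef]
      apply Finset.sum_congr rfl; intro p _
      simp only [hFdef]
      rw [hchi2 p.1 p.2, hchi1 p.1, hchi1 p.2]
    have hvolG_eq : volG s = volG (f u1 ^ 2) := by
      simp only [hvolGdef]
      apply Finset.sum_congr rfl; intro u _
      rw [hchi1 u]
    have hfu1 : f u1 ≠ 0 := by
      intro h; rw [h] at hu1s; norm_num at hu1s; linarith [hsIoc.1]
    have := hu0min u1 (Finset.mem_filter.2 ⟨Finset.mem_univ _, hfu1⟩)
    rw [hnumG_eq, hvolG_eq, hsstardef]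
    exact this
  -- the averaging argument
  have hIoc1 : (MeasureTheory.volume (Set.Ioc (0:ℝ) 1)).toReal = 1 := by
    rw [Real.volume_Ioc]; norm_num
  have hDint : MeasureTheory.IntegrableOn (fun s => numG s - κ * volG s)
      (Set.Ioc 0 1) MeasureTheory.volume := hnumGint.sub (hvolGint.const_mul κ)
  have hintD : ∫ s in Set.Ioc (0:ℝ) 1, (numG s - κ * volG s)
      = (∫ s in Set.Ioc (0:ℝ) 1, numG s) - κ * ∫ s in Set.Ioc (0:ℝ) 1, volG s := by
    rw [MeasureTheory.integral_sub hnumGint (hvolGint.const_mul κ),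
      MeasureTheory.integral_const_mul]
  have hDneg : numG sstar - κ * volG sstar ≤ 0 := by
    have hge := MeasureTheory.setIntegral_ge_of_const_le (μ := MeasureTheory.volume)
      (measurableSet_Ioc) (by rw [Real.volume_Ioc]; exact ENNReal.ofReal_ne_top)
      hmono hDint
    rw [MeasureTheory.measureReal_def, hIoc1, one_smul] at hge
    have : ∫ s in Set.Ioc (0:ℝ) 1, (numG s - κ * volG s) ≤ 0 := by
      rw [hintD, hnumGI, hvolGI]
      linarith [hslice]
    linarith
  -- conclude
  have hstarmem : ustar ∈ W1 sstar ∪ W2 sstar := by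
    have hs1 : sstar ≤ f ustar ^ 2 := by rw [hustar]; exact hsstar1
    rcases lt_trichotomy (f ustar) 0 with h' | h' | h'
    · exact Finset.mem_union_right _ (by rw [hW2def]; exact Finset.mem_filter.2 ⟨Finset.mem_univ _, h', hs1⟩)
    · exact absurd h' hfstar
    · exact Finset.mem_union_left _ (by rw [hW1def]; exact Finset.mem_filter.2 ⟨Finset.mem_univ _, h', hs1⟩)
  have hvolpos : 0 < vol (deg w) (W1 sstar ∪ W2 sstar) :=
    Finset.sum_pos (fun u _ => hd u) ⟨ustar, hstarmem⟩
  refine ⟨W1 sstar, W2 sstar, ?_, ⟨ustar, hstarmem⟩, ?_⟩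
  · rw [Finset.disjoint_left]
    intro u hu1 hu2
    rw [hW1def] at hu1
    rw [hW2def] at hu2
    exact absurd (Finset.mem_filter.1 hu2).2.1 (asymm (Finset.mem_filter.1 hu1).2.1)
  · rw [betaR, div_le_iff₀ hvolpos]
    have hn := hnum_eq sstar hsstar0
    have hv := hvol_eq sstar hsstar0
    rw [hn, hv]
    linarith [hDneg]


/-- **signed Cheeger inequality.**
`λ₁(Δ^σ)/2 ≤ h₁^σ(μ_d) ≤ √(2 λ₁(Δ^σ))`. -/
theorem signed_cheeger_inequality {N : ℕ} (hN : 0 < N) (w sgn : Fin N → Fin N → ℝ)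
    (hG : IsWSG w sgn) (hd : ∀ u, 0 < deg w u) :
    evals (nlapSym w sgn) ⟨0, hN⟩ / 2 ≤ h1 w sgn (deg w) ∧
    h1 w sgn (deg w) ≤ Real.sqrt (2 * evals (nlapSym w sgn) ⟨0, hN⟩) := by
  classical
  have hM : (nlapSym w sgn).IsHermitian := nlapSym_isHermitian w sgn hG
  set lam := evals (nlapSym w sgn) ⟨0, hN⟩ with hlamdef
  set SS := {x | ∃ V1 V2 : Finset (Fin N),
    Disjoint V1 V2 ∧ (V1 ∪ V2).Nonempty ∧ x = betaR w sgn (deg w) V1 V2} with hSS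
  have hsetne : SS.Nonempty := by
    refine ⟨betaR w sgn (deg w) Finset.univ ∅, Finset.univ, ∅, ?_, ?_, rfl⟩
    · exact Finset.disjoint_empty_right _
    · exact ⟨⟨0, hN⟩, by simp⟩
  have hnumnn : ∀ V1 V2 : Finset (Fin N),
      0 ≤ 2 * Epos w sgn V1 V2 + Eneg w sgn V1 V1 + Eneg w sgn V2 V2 +
        EE w (V1 ∪ V2) (V1 ∪ V2)ᶜ := by
    intro V1 V2
    have h1 : 0 ≤ Epos w sgn V1 V2 :=
      Finset.sum_nonneg fun u _ => Finset.sum_nonneg fun v _ => by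
        split_ifs; exacts [hG.w_nonneg u v, le_refl 0]
    have h2 : 0 ≤ Eneg w sgn V1 V1 :=
      Finset.sum_nonneg fun u _ => Finset.sum_nonneg fun v _ => by
        split_ifs; exacts [hG.w_nonneg u v, le_refl 0]
    have h3 : 0 ≤ Eneg w sgn V2 V2 :=
      Finset.sum_nonneg fun u _ => Finset.sum_nonneg fun v _ => by
        split_ifs; exacts [hG.w_nonneg u v, le_refl 0]
    have h4 : 0 ≤ EE w (V1 ∪ V2) (V1 ∪ V2)ᶜ :=
      Finset.sum_nonneg fun u _ => Finset.sum_nonneg fun v _ => hG.w_nonneg u v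
    linarith
  have hbdd : BddBelow SS := by
    refine ⟨0, ?_⟩
    rintro b ⟨V1, V2, hdisj, hne, rfl⟩
    rw [betaR]
    apply div_nonneg (hnumnn V1 V2)
    exact Finset.sum_nonneg fun u _ => (hd u).le
  constructor
  · -- easy direction
    apply le_csInf hsetne
    rintro b ⟨V1, V2, hdisj, hne, rfl⟩
    have hvolpos : 0 < vol (deg w) (V1 ∪ V2) := Finset.sum_pos (fun u _ => hd u) hne
    have hray := evals_zero_mul_le_quadForm hN hM
      (fun u => Real.sqrt (deg w u) *
        (if u ∈ V1 then (1:ℝ) else if u ∈ V2 then -1 else 0))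
    beta_reduce at hray
    rw [← hlamdef] at hray
    have hqf := quadForm_eq w sgn hd
      (fun u => if u ∈ V1 then (1:ℝ) else if u ∈ V2 then -1 else 0)
    beta_reduce at hqf
    have hQe := Q_expand w sgn hG
      (fun u => if u ∈ V1 then (1:ℝ) else if u ∈ V2 then -1 else 0)
    beta_reduce at hQe
    have hEasy := easy_pair w sgn hG V1 V2 hdisj
    have hx2 : ∑ u, (Real.sqrt (deg w u) *
        (if u ∈ V1 then (1:ℝ) else if u ∈ V2 then -1 else 0)) ^ 2
        = ∑ u, deg w u * (if u ∈ V1 then (1:ℝ) else if u ∈ V2 then -1 else 0) ^ 2 := by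
      apply Finset.sum_congr rfl; intro u _
      rw [mul_pow, Real.sq_sqrt (hd u).le]
    have hvolf : ∑ u, deg w u * (if u ∈ V1 then (1:ℝ) else if u ∈ V2 then -1 else 0) ^ 2
        = vol (deg w) (V1 ∪ V2) := by
      rw [vol]
      rw [show ∑ u ∈ V1 ∪ V2, deg w u = ∑ u, if u ∈ V1 ∪ V2 then deg w u else 0 by
        rw [Finset.sum_ite_mem, Finset.univ_inter]]
      apply Finset.sum_congr rfl; intro u _
      by_cases h1 : u ∈ V1 <;> by_cases h2 : u ∈ V2 <;>
        simp [h1, h2, Finset.mem_union]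
    have h5 : lam * ∑ u, deg w u *
        (if u ∈ V1 then (1:ℝ) else if u ∈ V2 then -1 else 0) ^ 2
        ≤ 2 * (2 * Epos w sgn V1 V2 + Eneg w sgn V1 V1 + Eneg w sgn V2 V2 +
            EE w (V1 ∪ V2) (V1 ∪ V2)ᶜ) := by
      have h6 : lam * ∑ u, (Real.sqrt (deg w u) *
          (if u ∈ V1 then (1:ℝ) else if u ∈ V2 then -1 else 0)) ^ 2
          = lam * ∑ u, deg w u *
            (if u ∈ V1 then (1:ℝ) else if u ∈ V2 then -1 else 0) ^ 2 := by
        rw [hx2]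
      linarith [hray, hqf, hQe, hEasy]
    rw [betaR, le_div_iff₀ hvolpos, ← hvolf]
    linarith [h5]
  · -- hard direction
    obtain ⟨x, hx1, hx2⟩ := exists_eigvec hN hM
    rw [← hlamdef] at hx2
    set f0 : Fin N → ℝ := fun u => x u / Real.sqrt (deg w u) with hf0
    have hsne : ∀ u, Real.sqrt (deg w u) ≠ 0 := fun u => (Real.sqrt_pos.2 (hd u)).ne'
    have hxfu : ∀ u, Real.sqrt (deg w u) * f0 u = x u := by
      intro u; simp only [hf0]; rw [mul_comm, div_mul_cancel₀ _ (hsne u)]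
    have hsum0 : ∑ u, deg w u * f0 u ^ 2 = 1 := by
      rw [← hx1]
      apply Finset.sum_congr rfl; intro u _
      simp only [hf0]
      rw [div_pow, Real.sq_sqrt (hd u).le]
      field_simp [(hd u).ne']
    have hqf := quadForm_eq w sgn hd f0
    have harg : (fun v => Real.sqrt (deg w v) * f0 v) = x := funext hxfu
    rw [harg] at hqf
    simp only [hxfu, hx2] at hqf
    have hL : ∑ u, x u * (lam * x u) = lam := by
      have e : ∑ u, x u * (lam * x u) = lam * ∑ u, x u ^ 2 := by
        rw [Finset.mul_sum]; apply Finset.sum_congr rfl; intro u _; ring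
      rw [e, hx1, mul_one]
    have hcross : ∑ u, ∑ v, sgn u v * w u v * (f0 u * f0 v) = 1 - lam := by
      rw [hL, hsum0] at hqf; linarith
    have hQ0 : ∑ u, ∑ v, w u v * (f0 u - sgn u v * f0 v) ^ 2
        = 2 * lam * ∑ u, deg w u * f0 u ^ 2 := by
      rw [Q_expand w sgn hG f0, hcross, hsum0]; ring
    have hex0 : ∃ u, f0 u ≠ 0 := by
      by_contra h
      push_neg at h
      rw [show ∑ u, deg w u * f0 u ^ 2 = 0 from Finset.sum_eq_zero fun u _ => by
        rw [h u]; ring] at hsum0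
      norm_num at hsum0
    obtain ⟨uz, huz⟩ := hex0
    have hune : (Finset.univ : Finset (Fin N)).Nonempty := ⟨⟨0, hN⟩, Finset.mem_univ _⟩
    set c := Finset.univ.sup' hune (fun u => |f0 u|) with hc
    have hcpos : 0 < c := by
      have h1 := Finset.le_sup' (fun u => |f0 u|) (Finset.mem_univ uz)
      have h2 : 0 < |f0 uz| := abs_pos.2 huz
      rw [hc]; exact lt_of_lt_of_le h2 h1
    have hcle : ∀ u, |f0 u| ≤ c := fun u =>
      Finset.le_sup' (fun u => |f0 u|) (Finset.mem_univ u)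
    set g : Fin N → ℝ := fun u => f0 u / c with hg
    have hgsq : ∀ u, g u ^ 2 = f0 u ^ 2 / c ^ 2 := by
      intro u; simp only [hg]; rw [div_pow]
    have hTg : ∑ u, deg w u * g u ^ 2 = (∑ u, deg w u * f0 u ^ 2) / c ^ 2 := by
      rw [Finset.sum_div]; apply Finset.sum_congr rfl; intro u _; rw [hgsq u]; ring
    have hQg : ∑ u, ∑ v, w u v * (g u - sgn u v * g v) ^ 2
        = 2 * lam * ∑ u, deg w u * g u ^ 2 := by
      have e : ∀ u v, w u v * (g u - sgn u v * g v) ^ 2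
          = w u v * (f0 u - sgn u v * f0 v) ^ 2 / c ^ 2 := by
        intro u v
        rw [show g u - sgn u v * g v = (f0 u - sgn u v * f0 v) / c by
          simp only [hg]; ring, div_pow, mul_div_assoc]
      calc ∑ u, ∑ v, w u v * (g u - sgn u v * g v) ^ 2
          = (∑ u, ∑ v, w u v * (f0 u - sgn u v * f0 v) ^ 2) / c ^ 2 := by
            rw [Finset.sum_div]
            apply Finset.sum_congr rfl; intro u _
            rw [Finset.sum_div]
            apply Finset.sum_congr rfl; intro v _
            exact e u v
        _ = 2 * lam * ((∑ u, deg w u * f0 u ^ 2) / c ^ 2) := by rw [hQ0]; ring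
        _ = 2 * lam * ∑ u, deg w u * g u ^ 2 := by rw [hTg]
    have hgle : ∀ u, g u ^ 2 ≤ 1 := by
      intro u
      rw [hgsq u, div_le_one (by positivity)]
      have h1 := hcle u
      nlinarith [sq_abs (f0 u), abs_nonneg (f0 u)]
    obtain ⟨us, _, hus⟩ := Finset.exists_mem_eq_sup' hune (fun u => |f0 u|)
    rw [← hc] at hus
    have hgus : g us ^ 2 = 1 := by
      rw [hgsq us, div_eq_one_iff_eq (by positivity)]
      rw [hus, sq_abs]
    obtain ⟨V1, V2, hd12, hne12, hb⟩ := hard_pair w sgn hG hd lam g hQg hgle us hgus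
    exact le_trans (csInf_le hbdd ⟨V1, V2, hd12, hne12, rfl⟩) hb

end SignedGraph
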